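/- Let f : V → W be a linear map of finite-dimensional real inner product spaces and λ ≥ 0. Then F(f)(λ) equals the number of eigenvalues (counted with multiplicity) of f* ∘ f : V → V that are at most λ². -/

import Mathlib

open scoped RealInnerProductSpace

variable {V E : Type*}

noncomputable def c1 [Fintype E] [DecidableEq V] (v0 v1 : E → V) :
    EuclideanSpace ℝ E →ₗ[ℝ] EuclideanSpace ℝ V where
  toFun a := WithLp.toLp 2 fun v =>
    (∑ e ∈ Finset.univ.filter (fun e => v1 e = v), a e)
      - (∑ e ∈ Finset.univ.filter (fun e => v0 e = v), a e)
  map_add' a b := by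
    ext v
    simp [PiLp.add_apply, Finset.sum_add_distrib] <;>
    ring
  map_smul' c a := by
    ext v
    simp [PiLp.smul_apply, smul_eq_mul, ← Finset.mul_sum, mul_sub]

/-- Spectral density function of a linear map of inner product spaces. -/
noncomputable def sdf {V W : Type*} [NormedAddCommGroup V] [InnerProductSpace ℝ V]
    [NormedAddCommGroup W] [InnerProductSpace ℝ W]
    (f : V →ₗ[ℝ] W) (lam : ℝ) : ℕ :=
  sSup {n : ℕ | ∃ U : Submodule ℝ V, Module.finrank ℝ U = n ∧ ∀ v ∈ U, ‖f v‖ ≤ lam * ‖v‖}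

/-- Degree of a vertex in a finite directed multigraph (loops count twice). -/
def vdeg [Fintype E] [DecidableEq V] (v0 v1 : E → V) (v : V) : ℕ :=
  (Finset.univ.filter fun e => v0 e = v).card + (Finset.univ.filter fun e => v1 e = v).card

/-- Maximal vertex degree of a finite multigraph. -/
def maxDeg [Fintype V] [Fintype E] [DecidableEq V] (v0 v1 : E → V) : ℕ :=
  Finset.univ.sup (vdeg v0 v1)

/-- The simple graph underlying a directed multigraph. -/
def supportGraph (v0 v1 : E → V) : SimpleGraph V where
  Adj u w := u ≠ w ∧ ∃ e, (v0 e = u ∧ v1 e = w) ∨ (v0 e = w ∧ v1 e = u)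
  symm := by
    constructor
    rintro u w ⟨h, e, he⟩
    exact ⟨h.symm, e, he.symm⟩
  loopless := by constructor; rintro u ⟨h, _⟩; exact h rfl

section Aux
variable {V : Type*} [NormedAddCommGroup V] [InnerProductSpace ℝ V] [FiniteDimensional ℝ V]

lemma sdf_aux_inner_sum (T : V →ₗ[ℝ] V) (hT : T.IsSymmetric) {n : ℕ}
    (hn : Module.finrank ℝ V = n) (v : V) :
    ⟪T v, v⟫ = ∑ i, hT.eigenvalues hn i * ((hT.eigenvectorBasis hn).repr v i) ^ 2 := by
  set b := hT.eigenvectorBasis hn with hb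
  rw [← b.repr.inner_map_map (T v) v]
  simp only [PiLp.inner_apply, RCLike.inner_apply, conj_trivial]
  refine Finset.sum_congr rfl fun i _ => ?_
  rw [hb, hT.eigenvectorBasis_apply_self_apply hn v i]
  simp only [RCLike.ofReal_real_eq_id, id]
  ring

lemma sdf_aux_norm_sum {n : ℕ} (b : OrthonormalBasis (Fin n) ℝ V) (v : V) :
    ‖v‖ ^ 2 = ∑ i, (b.repr v i) ^ 2 := by
  rw [← real_inner_self_eq_norm_sq, ← b.repr.inner_map_map v v]
  simp only [PiLp.inner_apply, RCLike.inner_apply, conj_trivial]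
  exact Finset.sum_congr rfl fun i _ => (sq _).symm

lemma sdf_aux_mem_span {n : ℕ} (b : OrthonormalBasis (Fin n) ℝ V) (s : Finset (Fin n)) (v : V) :
    v ∈ Submodule.span ℝ (b '' ↑s) ↔ ∀ i ∉ s, b.repr v i = 0 := by
  rw [← b.coe_toBasis, Module.Basis.mem_span_image, Finsupp.support_subset_iff]
  simp [b.coe_toBasis_repr_apply]

lemma sdf_aux_finrank_span {n : ℕ} (b : OrthonormalBasis (Fin n) ℝ V) (s : Finset (Fin n)) :
    Module.finrank ℝ (Submodule.span ℝ (b '' ↑s)) = s.card := by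
  have h1 : (b '' ↑s : Set V) = Set.range (fun i : s => b i) :=
    Set.image_eq_range _ _
  have h2 : LinearIndependent ℝ (fun i : s => b i) :=
    b.orthonormal.linearIndependent.comp _ Subtype.coe_injective
  rw [h1, finrank_span_eq_card h2, Fintype.card_coe]

end Aux

set_option maxHeartbeats 1000000 in
/-- F(f)(λ) equals the number of eigenvalues (with multiplicity) of f* ∘ f that are ≤ λ²,
expressed as the dimension of the span of the corresponding eigenspaces. -/
theorem sdf_eq_eigenvalue_count {V W : Type*} [NormedAddCommGroup V] [InnerProductSpace ℝ V]
    [FiniteDimensional ℝ V] [NormedAddCommGroup W] [InnerProductSpace ℝ W]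
    [FiniteDimensional ℝ W] (f : V →ₗ[ℝ] W) (lam : ℝ) (hlam : 0 ≤ lam) :
    sdf f lam = Module.finrank ℝ
      ((⨆ mu : {mu : ℝ // mu ≤ lam ^ 2},
        Module.End.eigenspace (LinearMap.adjoint f ∘ₗ f) mu.1 : Submodule ℝ V)) := by
  set T : V →ₗ[ℝ] V := LinearMap.adjoint f ∘ₗ f with hTdef
  have hT : T.IsSymmetric := by
    intro x y
    simp only [hTdef, LinearMap.comp_apply, LinearMap.adjoint_inner_left,
      LinearMap.adjoint_inner_right]
  obtain ⟨n, hn⟩ : ∃ n, Module.finrank ℝ V = n := ⟨_, rfl⟩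
  set b := hT.eigenvectorBasis hn with hb
  set μ := hT.eigenvalues hn with hμ
  -- ‖f v‖² as a sum
  have hfv : ∀ v : V, ‖f v‖ ^ 2 = ∑ i, μ i * (b.repr v i) ^ 2 := by
    intro v
    have h1 : ⟪T v, v⟫ = ‖f v‖ ^ 2 := by
      rw [hTdef]
      simp only [LinearMap.comp_apply]
      rw [LinearMap.adjoint_inner_left, real_inner_self_eq_norm_sq]
    rw [← h1, sdf_aux_inner_sum T hT hn v]
  have hnv : ∀ v : V, ‖v‖ ^ 2 = ∑ i, (b.repr v i) ^ 2 := fun v => sdf_aux_norm_sum b v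
  set A : Finset (Fin n) := Finset.univ.filter (fun i => μ i ≤ lam ^ 2) with hA
  have hgt : ∀ i ∉ A, lam ^ 2 < μ i := by
    intro i hi
    by_contra h
    exact hi (by simp [hA, not_lt.mp h])
  -- the eigenspace sup is the span of eigenvectors with small eigenvalue
  have hU : (⨆ mu : {mu : ℝ // mu ≤ lam ^ 2}, Module.End.eigenspace T mu.1)
      = Submodule.span ℝ (b '' ↑A) := by
    apply le_antisymm
    · apply iSup_le
      rintro ⟨μ0, hμ0⟩ v hv
      rw [Module.End.mem_eigenspace_iff] at hv
      rw [sdf_aux_mem_span]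
      intro i hi
      have hμi : lam ^ 2 < μ i := hgt i hi
      by_contra hne
      have h2 := hT.eigenvectorBasis_apply_self_apply hn v i
      rw [hv] at h2
      simp only [map_smul, PiLp.smul_apply, smul_eq_mul,
        RCLike.ofReal_real_eq_id, id] at h2
      have := mul_right_cancel₀ hne h2
      linarith
    · rw [Submodule.span_le]
      rintro x ⟨i, hi, rfl⟩
      have hbi : b i ∈ Module.End.eigenspace T (μ i) :=
        (hT.hasEigenvector_eigenvectorBasis hn i).1
      have hμi : μ i ≤ lam ^ 2 := by
        simp only [hA, Finset.coe_filter, Set.mem_setOf_eq] at hi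
        exact hi.2
      exact le_iSup (fun mu : {mu : ℝ // mu ≤ lam ^ 2} =>
        Module.End.eigenspace T mu.1) ⟨μ i, hμi⟩ hbi
  -- disjointness of any "good" subspace from the complementary span
  have hdisj : ∀ S : Submodule ℝ V, (∀ v ∈ S, ‖f v‖ ≤ lam * ‖v‖) →
      Disjoint S (Submodule.span ℝ (b '' ↑(Aᶜ))) := by
    intro S hS
    rw [Submodule.disjoint_def]
    intro v hvS hvB
    by_contra hv0
    have hc := (sdf_aux_mem_span b Aᶜ v).1 hvB
    have hcA : ∀ i ∈ A, b.repr v i = 0 := fun i hi =>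
      hc i (by simp [Finset.mem_compl, hi])
    have hle : ∑ i, μ i * (b.repr v i) ^ 2 ≤ lam ^ 2 * ∑ i, (b.repr v i) ^ 2 := by
      have h1 := hS v hvS
      have h2 : ‖f v‖ ^ 2 ≤ (lam * ‖v‖) ^ 2 := by
        nlinarith [norm_nonneg (f v), norm_nonneg v]
      rw [hfv v] at h2
      calc ∑ i, μ i * (b.repr v i) ^ 2 ≤ (lam * ‖v‖) ^ 2 := h2
        _ = lam ^ 2 * ‖v‖ ^ 2 := by ring
        _ = lam ^ 2 * ∑ i, (b.repr v i) ^ 2 := by rw [hnv v]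
    have hpos : 0 < ∑ i, (μ i - lam ^ 2) * (b.repr v i) ^ 2 := by
      obtain ⟨j, hj⟩ : ∃ j, b.repr v j ≠ 0 := by
        by_contra h
        push_neg at h
        exact hv0 (b.repr.injective (by ext i; simp [h]))
      have hjA : j ∉ A := fun hjA => hj (hcA j hjA)
      refine Finset.sum_pos' (fun i _ => ?_) ⟨j, Finset.mem_univ j, ?_⟩
      · by_cases hiA : i ∈ A
        · rw [hcA i hiA]; simp
        · exact mul_nonneg (by linarith [hgt i hiA]) (sq_nonneg _)
      · exact mul_pos (by linarith [hgt j hjA])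
          (lt_of_le_of_ne (sq_nonneg _) (Ne.symm (pow_ne_zero 2 hj)))
    have heq : ∑ i, (μ i - lam ^ 2) * (b.repr v i) ^ 2
        = (∑ i, μ i * (b.repr v i) ^ 2) - lam ^ 2 * ∑ i, (b.repr v i) ^ 2 := by
      rw [Finset.mul_sum, ← Finset.sum_sub_distrib]
      exact Finset.sum_congr rfl fun i _ => by ring
    rw [heq] at hpos
    linarith
  -- the span of the "small" eigenvectors is a good subspace
  have hmemA : A.card ∈ {k : ℕ | ∃ U : Submodule ℝ V,
      Module.finrank ℝ U = k ∧ ∀ v ∈ U, ‖f v‖ ≤ lam * ‖v‖} := by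
    refine ⟨Submodule.span ℝ (b '' ↑A), sdf_aux_finrank_span b A, ?_⟩
    intro v hv
    have hc := (sdf_aux_mem_span b A v).1 hv
    have h2 : ‖f v‖ ^ 2 ≤ (lam * ‖v‖) ^ 2 := by
      rw [hfv v]
      have h3 : (lam * ‖v‖) ^ 2 = ∑ i, lam ^ 2 * (b.repr v i) ^ 2 := by
        rw [← Finset.mul_sum, ← hnv v]; ring
      rw [h3]
      refine Finset.sum_le_sum fun i _ => ?_
      by_cases hiA : i ∈ A
      · have : μ i ≤ lam ^ 2 := by simpa [hA] using hiA
        nlinarith [sq_nonneg (b.repr v i)]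
      · rw [hc i hiA]; simp
    nlinarith [norm_nonneg (f v), mul_nonneg hlam (norm_nonneg v)]
  have hbdd : BddAbove {k : ℕ | ∃ U : Submodule ℝ V,
      Module.finrank ℝ U = k ∧ ∀ v ∈ U, ‖f v‖ ≤ lam * ‖v‖} := by
    refine ⟨n, ?_⟩
    rintro k ⟨U, rfl, -⟩
    exact hn ▸ Submodule.finrank_le U
  have hcard : A.card + Aᶜ.card = n := by
    rw [Finset.card_add_card_compl, Fintype.card_fin]
  rw [hU, sdf_aux_finrank_span b A]
  unfold sdf
  apply le_antisymm
  · refine csSup_le ⟨A.card, hmemA⟩ ?_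
    rintro k ⟨S, rfl, hS⟩
    have hd := hdisj S hS
    have hle := Submodule.finrank_add_finrank_le_of_disjoint hd
    rw [sdf_aux_finrank_span b Aᶜ, hn] at hle
    omega
  · exact le_csSup hbdd hmemA
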